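/- Fix integers k ≥ 1 and n > k. Then the infimum over all m ≥ 1 and type distributions G over m types for n agents, of the supremum over J ∈ {1,...,m} and ρ ∈ (0,1], of the infimum over all valuations r_1 ≥ ... ≥ r_m ≥ 0 with Proph(I) > 0 (where I is the instance determined by G and r) of OST_{J,ρ}(I)/Proph(I), equals inf over m and G of sup over J, ρ of innerLP^{OST(J,ρ)/Proph}_{k,n}(G); and the analogous statement holds with ExAnte(I) in place of Proph(I) and innerLP^{OST(J,ρ)/ExAnte}_{k,n}(G) in place of innerLP^{OST(J,ρ)/Proph}_{k,n}(G). -/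

import Mathlib

open Finset

/-- The polytope `P(k,n)` of state/acceptance probability vectors. -/
def memP (k n : ℕ) (x y : ℕ → ℕ → ℝ) : Prop :=
  x 1 k = 1 ∧
  (∀ l, 1 ≤ l → l < k → x 1 l = 0) ∧
  (∀ i ∈ Finset.Icc 2 n, ∀ l ∈ Finset.Icc 1 k,
    x i l = x (i-1) l - y (i-1) l + (if l < k then y (i-1) (l+1) else 0)) ∧
  (∀ i ∈ Finset.Icc 1 n, ∀ l ∈ Finset.Icc 1 k, 0 ≤ y i l ∧ y i l ≤ x i l)

/-- `G` is a valid family of type distributions over `m` types for `n` agents. -/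
def IsTypeDist (n m : ℕ) (G : ℕ → ℕ → ℝ) : Prop :=
  ∀ i ∈ Finset.Icc 1 n, G i 0 = 0 ∧ G i m = 1 ∧ ∀ j ∈ Finset.Icc 1 m, G i (j-1) ≤ G i j

/-- `E[min{X_1+...+X_t, k}]` for independent Bernoulli `X_i` with success probabilities `p i`. -/
noncomputable def eMinBer (p : ℕ → ℝ) (t k : ℕ) : ℝ :=
  ∑ S ∈ (Finset.Icc 1 t).powerset,
    (∏ i ∈ S, p i) * (∏ i ∈ Finset.Icc 1 t \ S, (1 - p i)) * min (S.card : ℝ) (k : ℝ)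

noncomputable def QProph (k n : ℕ) (G : ℕ → ℕ → ℝ) (j : ℕ) : ℝ :=
  eMinBer (fun i => G i j) n k

noncomputable def QExAnte (k n : ℕ) (G : ℕ → ℕ → ℝ) (j : ℕ) : ℝ :=
  min (∑ i ∈ Finset.Icc 1 n, G i j) (k : ℝ)

noncomputable def coverSum (k n : ℕ) (G : ℕ → ℕ → ℝ) (j : ℕ) (x y : ℕ → ℕ → ℝ) : ℝ :=
  ∑ i ∈ Finset.Icc 1 n, ∑ l ∈ Finset.Icc 1 k, min (y i l) (G i j * x i l)

/-- `τ_i(J,ρ)`. -/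
noncomputable def tauOf (G : ℕ → ℕ → ℝ) (J : ℕ) (ρ : ℝ) (i : ℕ) : ℝ :=
  (1 - ρ) * G i (J-1) + ρ * G i J

/-- The simplified dual LP `innerLP^{OST(J,ρ)/·}_{k,n}(G)` with coefficients `Q`. -/
noncomputable def innerLP_OST (k n m : ℕ) (G : ℕ → ℕ → ℝ) (J : ℕ) (ρ : ℝ) (Q : ℕ → ℝ) : ℝ :=
  sSup {θ : ℝ | ∃ x y, memP k n x y ∧
    (∀ i ∈ Finset.Icc 1 n, ∀ l ∈ Finset.Icc 1 k, y i l = tauOf G J ρ i * x i l) ∧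
    ∀ j ∈ Finset.Icc 1 m, θ * Q j ≤ coverSum k n G j x y}

/-- Prophet's value on realized valuations `v`. -/
noncomputable def prophVal (n k : ℕ) (v : Fin n → ℝ) : ℝ :=
  sSup {s : ℝ | ∃ S : Finset (Fin n), S.card ≤ k ∧ s = ∑ i ∈ S, v i}

/-- Expected prophet value on the instance given by `r` and `p`. -/
noncomputable def Proph (k n m : ℕ) (r : ℕ → ℝ) (p : ℕ → ℕ → ℝ) : ℝ :=
  ∑ t ∈ Fintype.piFinset (fun _ : Fin n => Finset.Icc 1 m),
    (∏ i : Fin n, p (i.1+1) (t i)) * prophVal n k (fun i => r (t i))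

/-- The ex-ante relaxation of the instance given by `r` and `p`. -/
noncomputable def ExAnte (k n m : ℕ) (r : ℕ → ℝ) (p : ℕ → ℕ → ℝ) : ℝ :=
  sSup {s : ℝ | ∃ a : ℕ → ℝ,
    (∀ j ∈ Finset.Icc 1 m, 0 ≤ a j ∧ a j ≤ ∑ i ∈ Finset.Icc 1 n, p i j) ∧
    (∑ j ∈ Finset.Icc 1 m, a j ≤ (k : ℝ)) ∧
    s = ∑ j ∈ Finset.Icc 1 m, r j * a j}

/-- Static threshold policy value-to-go: `ostW n m J ρ r p d l = W_{n+1-d}^l`, i.e.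
`W_{n+1}^l = 0`, `W_i^0 = 0`, and
`W_i^l = W_{i+1}^l + Σ_{j<J} p_{ij}(r_j - (W_{i+1}^l - W_{i+1}^{l-1}))
       + ρ·p_{iJ}(r_J - (W_{i+1}^l - W_{i+1}^{l-1}))`. -/
noncomputable def ostW (n m J : ℕ) (ρ : ℝ) (r : ℕ → ℝ) (p : ℕ → ℕ → ℝ) : ℕ → ℕ → ℝ
  | 0 => fun _ => 0
  | (d+1) => fun l =>
      if l = 0 then 0 else
        ostW n m J ρ r p d l
          + (∑ j ∈ Finset.Icc 1 (J-1),
              p (n - d) j * (r j - (ostW n m J ρ r p d l - ostW n m J ρ r p d (l-1))))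
          + ρ * p (n - d) J * (r J - (ostW n m J ρ r p d l - ostW n m J ρ r p d (l-1)))

/-- `OST_{J,ρ}(I) = W_1^k`. -/
noncomputable def OSTval (k n m J : ℕ) (ρ : ℝ) (r : ℕ → ℝ) (p : ℕ → ℕ → ℝ) : ℝ :=
  ostW n m J ρ r p n k

/-- Valuations `r` are admissible for `m` types: `r_1 ≥ ... ≥ r_m ≥ 0`. -/
def IsValuation (m : ℕ) (r : ℕ → ℝ) : Prop :=
  (∀ j, 1 ≤ j → j < m → r (j+1) ≤ r j) ∧ 0 ≤ r m

/-- Probabilities from a type-distribution family. -/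
def pOf (G : ℕ → ℕ → ℝ) (i j : ℕ) : ℝ := G i j - G i (j-1)


/-! ### Auxiliary machinery -/

section Aux
open Finset

lemma tele1 (f : ℕ → ℝ) : ∀ b a, a ≤ b → ∑ j ∈ Icc (a+1) b, (f j - f (j-1)) = f b - f a := by
  intro b
  induction b with
  | zero => intro a ha; interval_cases a; simp
  | succ b ih =>
    intro a ha
    rcases Nat.lt_or_ge a (b+1) with h | h
    · have hab : a ≤ b := Nat.lt_succ_iff.mp h
      rw [Finset.sum_Icc_succ_top (by omega : a + 1 ≤ b + 1)]
      rw [ih a hab]; simp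
    · have : a = b + 1 := le_antisymm ha h
      subst this; simp

lemma tele2 (f : ℕ → ℝ) : ∀ b a, a ≤ b + 1 → ∑ j ∈ Icc a b, (f j - f (j+1)) = f a - f (b+1) := by
  intro b
  induction b with
  | zero => intro a ha; interval_cases a <;> simp
  | succ b ih =>
    intro a ha
    rcases Nat.lt_or_ge a (b+2) with h | h
    · have hab : a ≤ b + 1 := by omega
      rw [Finset.sum_Icc_succ_top hab, ih a hab]; ring
    · have : a = b + 2 := by omega
      subst this; simp

variable {n m : ℕ} {G : ℕ → ℕ → ℝ}

/-- Monotonicity of `G i ·` on `[0,m]`. -/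
lemma Gmono (hG : IsTypeDist n m G) {i : ℕ} (hi : i ∈ Icc 1 n) :
    ∀ {a b : ℕ}, a ≤ b → b ≤ m → G i a ≤ G i b := by
  intro a b hab hbm
  induction b with
  | zero => interval_cases a; exact le_rfl
  | succ b ih =>
    rcases Nat.lt_or_ge a (b+1) with h | h
    · have h1 : G i b ≤ G i (b+1) := by
        have := (hG i hi).2.2 (b+1) (by simp; omega)
        simpa using this
      exact le_trans (ih (by omega) (by omega)) h1
    · have : a = b + 1 := by omega
      subst this; exact le_rfl

lemma G_nonneg (hG : IsTypeDist n m G) {i : ℕ} (hi : i ∈ Icc 1 n) {j : ℕ} (hj : j ≤ m) :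
    0 ≤ G i j := by
  have := Gmono hG hi (Nat.zero_le j) hj
  rw [(hG i hi).1] at this; exact this

lemma G_le_one (hG : IsTypeDist n m G) {i : ℕ} (hi : i ∈ Icc 1 n) {j : ℕ} (hj : j ≤ m) :
    G i j ≤ 1 := by
  have := Gmono hG hi hj le_rfl
  rw [(hG i hi).2.1] at this; exact this

lemma pOf_nonneg (hG : IsTypeDist n m G) {i : ℕ} (hi : i ∈ Icc 1 n) {j : ℕ}
    (hj : j ∈ Icc 1 m) : 0 ≤ pOf G i j := by
  have := (hG i hi).2.2 j hj
  simp [pOf]; linarith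

lemma sum_pOf (hG : IsTypeDist n m G) {i : ℕ} (hi : i ∈ Icc 1 n) {b : ℕ} (hb : b ≤ m) :
    ∑ j ∈ Icc 1 b, pOf G i j = G i b := by
  have := tele1 (G i) b 0 (Nat.zero_le b)
  simp only [zero_add] at this
  rw [show (Icc 1 b) = Icc (0+1) b by norm_num]
  unfold pOf
  rw [this, (hG i hi).1, sub_zero]

lemma sum_pOf_upper (hG : IsTypeDist n m G) {i : ℕ} (hi : i ∈ Icc 1 n) {a : ℕ} (ha : a ≤ m) :
    ∑ j ∈ Icc (a+1) m, pOf G i j = 1 - G i a := by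
  have := tele1 (G i) m a ha
  unfold pOf
  rw [this, (hG i hi).2.1]

/-- Layer coefficients of a valuation. -/
noncomputable def cOf (m : ℕ) (r : ℕ → ℝ) (j : ℕ) : ℝ :=
  r j - (if j < m then r (j+1) else 0)

lemma sum_cOf (r : ℕ → ℝ) {a : ℕ} (ha1 : 1 ≤ a) (ham : a ≤ m) :
    ∑ j ∈ Icc a m, cOf m r j = r a := by
  have key : ∀ j ∈ Icc a m, cOf m r j
      = (fun j => if j ≤ m then r j else 0) j - (fun j => if j ≤ m then r j else 0) (j+1) := by
    intro j hj
    simp only [mem_Icc] at hj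
    by_cases h : j < m
    · simp [cOf, h, hj.2, (by omega : j + 1 ≤ m)]
    · have : j = m := by omega
      subst this
      simp [cOf]
  rw [Finset.sum_congr rfl key, tele2 _ m a (by omega)]
  simp [ham, (by omega : ¬ (m + 1 ≤ m))]

lemma cOf_nonneg {r : ℕ → ℝ} (hr : IsValuation m r) {j : ℕ} (hj : j ∈ Icc 1 m) :
    0 ≤ cOf m r j := by
  simp only [mem_Icc] at hj
  by_cases h : j < m
  · simp only [cOf, if_pos h]
    have := hr.1 j hj.1 h
    linarith
  · have : j = m := by omega
    subst this
    simp [cOf, h, hr.2]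

/-- Step valuations. -/
noncomputable def stepv (j0 : ℕ) : ℕ → ℝ := fun j => if j ≤ j0 then 1 else 0

lemma stepv_isValuation (j0 : ℕ) : IsValuation m (stepv j0) := by
  constructor
  · intro j _ _
    unfold stepv
    by_cases h1 : j + 1 ≤ j0
    · simp [h1, (by omega : j ≤ j0)]
    · by_cases h2 : j ≤ j0 <;> simp [h1, h2]
  · unfold stepv
    by_cases h : m ≤ j0 <;> simp [h]

lemma cOf_stepv {j0 j : ℕ} (hj0 : j0 ∈ Icc 1 m) (hj : j ∈ Icc 1 m) :
    cOf m (stepv j0) j = if j = j0 then 1 else 0 := by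
  simp only [mem_Icc] at hj0 hj
  unfold cOf stepv
  split_ifs <;> first | (exfalso; omega) | norm_num

/-- Every function agrees on `[1,m]` with its layer decomposition. -/
lemma layer_decomp (r : ℕ → ℝ) {a : ℕ} (ha1 : 1 ≤ a) (ham : a ≤ m) :
    ∑ j0 ∈ Icc 1 m, cOf m r j0 * stepv j0 a = r a := by
  have : ∀ j0 ∈ Icc 1 m, cOf m r j0 * stepv j0 a
      = if a ≤ j0 then cOf m r j0 else 0 := by
    intro j0 _
    unfold stepv
    by_cases h : a ≤ j0 <;> simp [h]
  rw [Finset.sum_congr rfl this, Finset.sum_ite, Finset.sum_const_zero, add_zero]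
  have hf : (Icc 1 m).filter (fun j0 => a ≤ j0) = Icc a m := by
    ext j0; simp only [mem_filter, mem_Icc]; omega
  rw [hf, sum_cOf r ha1 ham]


/-! ### Linearity of the policy DP in the valuation -/

lemma ostW_l0 (n m J : ℕ) (ρ : ℝ) (r : ℕ → ℝ) (p : ℕ → ℕ → ℝ) (d : ℕ) :
    ostW n m J ρ r p d 0 = 0 := by cases d <;> simp [ostW]

lemma ostW_zero (n m J : ℕ) (ρ : ℝ) (p : ℕ → ℕ → ℝ) :
    ∀ d l, ostW n m J ρ (fun _ => 0) p d l = 0 := by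
  intro d
  induction d with
  | zero => intro l; simp [ostW]
  | succ d ih =>
    intro l
    by_cases hl : l = 0
    · subst hl; simp [ostW]
    · simp [ostW, if_neg hl, ih]

lemma ostW_add (n m J : ℕ) (ρ : ℝ) (r s : ℕ → ℝ) (p : ℕ → ℕ → ℝ) :
    ∀ d l, ostW n m J ρ (fun j => r j + s j) p d l
      = ostW n m J ρ r p d l + ostW n m J ρ s p d l := by
  intro d
  induction d with
  | zero => intro l; simp [ostW]
  | succ d ih =>
    intro l
    by_cases hl : l = 0
    · subst hl; simp [ostW]
    · simp only [ostW, if_neg hl, ih]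
      have : ∀ j ∈ Icc 1 (J-1),
          p (n - d) j * (r j + s j
            - ((ostW n m J ρ r p d l + ostW n m J ρ s p d l)
              - (ostW n m J ρ r p d (l-1) + ostW n m J ρ s p d (l-1))))
          = p (n - d) j * (r j - (ostW n m J ρ r p d l - ostW n m J ρ r p d (l-1)))
            + p (n - d) j * (s j - (ostW n m J ρ s p d l - ostW n m J ρ s p d (l-1))) := by
        intro j _; ring
      rw [Finset.sum_congr rfl this, Finset.sum_add_distrib]
      ring

lemma ostW_smul (n m J : ℕ) (ρ a : ℝ) (r : ℕ → ℝ) (p : ℕ → ℕ → ℝ) :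
    ∀ d l, ostW n m J ρ (fun j => a * r j) p d l = a * ostW n m J ρ r p d l := by
  intro d
  induction d with
  | zero => intro l; simp [ostW]
  | succ d ih =>
    intro l
    by_cases hl : l = 0
    · subst hl; simp [ostW]
    · simp only [ostW, if_neg hl, ih]
      have : ∀ j ∈ Icc 1 (J-1),
          p (n - d) j * (a * r j
            - (a * ostW n m J ρ r p d l - a * ostW n m J ρ r p d (l-1)))
          = a * (p (n - d) j * (r j - (ostW n m J ρ r p d l - ostW n m J ρ r p d (l-1)))) := by
        intro j _; ring
      rw [Finset.sum_congr rfl this, ← Finset.mul_sum]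
      ring

lemma ostW_congr (n m J : ℕ) (ρ : ℝ) (r s : ℕ → ℝ) (p : ℕ → ℕ → ℝ) (hJ : 1 ≤ J)
    (h : ∀ j ∈ Icc 1 J, r j = s j) :
    ∀ d l, ostW n m J ρ r p d l = ostW n m J ρ s p d l := by
  intro d
  induction d with
  | zero => intro l; simp [ostW]
  | succ d ih =>
    intro l
    by_cases hl : l = 0
    · subst hl; simp [ostW]
    · simp only [ostW, if_neg hl, ih]
      rw [h J (by simp [hJ])]
      have hs : ∀ j ∈ Icc 1 (J-1),
          p (n - d) j * (r j - (ostW n m J ρ s p d l - ostW n m J ρ s p d (l-1)))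
          = p (n - d) j * (s j - (ostW n m J ρ s p d l - ostW n m J ρ s p d (l-1))) := by
        intro j hj
        simp only [mem_Icc] at hj
        rw [h j (by simp; omega)]
      rw [Finset.sum_congr rfl hs]

lemma ostW_finsum (n m J : ℕ) (ρ : ℝ) (p : ℕ → ℕ → ℝ) (F : Finset ℕ) (f : ℕ → ℕ → ℝ) :
    ∀ d l, ostW n m J ρ (fun j => ∑ j0 ∈ F, f j0 j) p d l
      = ∑ j0 ∈ F, ostW n m J ρ (f j0) p d l := by
  classical
  induction F using Finset.induction_on with
  | empty => intro d l; simpa using ostW_zero n m J ρ p d l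
  | insert a F hnotmem ih =>
    intro d l
    have : (fun j => ∑ j0 ∈ insert a F, f j0 j)
        = fun j => f a j + ∑ j0 ∈ F, f j0 j := by
      funext j; rw [Finset.sum_insert hnotmem]
    rw [this, ostW_add, ih, Finset.sum_insert hnotmem]

lemma OSTval_decomp (k n m J : ℕ) (ρ : ℝ) (r : ℕ → ℝ) (p : ℕ → ℕ → ℝ)
    (hJ1 : 1 ≤ J) (hJm : J ≤ m) :
    OSTval k n m J ρ r p = ∑ j0 ∈ Icc 1 m, cOf m r j0 * OSTval k n m J ρ (stepv j0) p := by
  unfold OSTval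
  have h1 : ∀ j ∈ Icc 1 J, r j = (fun a => ∑ j0 ∈ Icc 1 m, cOf m r j0 * stepv j0 a) j := by
    intro j hj
    simp only [mem_Icc] at hj
    exact (layer_decomp r hj.1 (le_trans hj.2 hJm)).symm
  rw [ostW_congr n m J ρ r _ p hJ1 h1, ostW_finsum]
  apply Finset.sum_congr rfl
  intro j0 _
  exact ostW_smul n m J ρ (cOf m r j0) (stepv j0) p n k


/-! ### The canonical polytope point -/

noncomputable def xsF (τ : ℕ → ℝ) (k : ℕ) : ℕ → ℕ → ℝ
  | 0 => fun l => if l = k then 1 else 0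
  | (i+1) => fun l =>
      (1 - τ (i+1)) * xsF τ k i l + τ (i+1) * (if l < k then xsF τ k i (l+1) else 0)

lemma xsF_nonneg (τ : ℕ → ℝ) (k : ℕ) :
    ∀ i, (∀ i', 1 ≤ i' → i' ≤ i → 0 ≤ τ i' ∧ τ i' ≤ 1) → ∀ l, 0 ≤ xsF τ k i l := by
  intro i
  induction i with
  | zero => intro _ l; simp only [xsF]; split <;> norm_num
  | succ i ih =>
    intro hτ l
    have h1 := hτ (i+1) (by omega) le_rfl
    have h2 : ∀ l, 0 ≤ xsF τ k i l := ih (fun i' h h' => hτ i' h (by omega))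
    simp only [xsF]
    have : (0:ℝ) ≤ τ (i+1) * (if l < k then xsF τ k i (l+1) else 0) := by
      apply mul_nonneg h1.1
      split
      · exact h2 _
      · exact le_rfl
    have h3 := mul_nonneg (by linarith [h1.2] : (0:ℝ) ≤ 1 - τ (i+1)) (h2 l)
    linarith

lemma tau_mem_Icc (hG : IsTypeDist n m G) {J : ℕ} {ρ : ℝ} (hJ1 : 1 ≤ J) (hJm : J ≤ m)
    (hρ0 : 0 < ρ) (hρ1 : ρ ≤ 1) {i : ℕ} (hi : i ∈ Icc 1 n) :
    0 ≤ tauOf G J ρ i ∧ tauOf G J ρ i ≤ 1 := by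
  have h1 : 0 ≤ G i (J-1) := G_nonneg hG hi (by omega)
  have h2 : G i (J-1) ≤ 1 := G_le_one hG hi (by omega)
  have h3 : 0 ≤ G i J := G_nonneg hG hi hJm
  have h4 : G i J ≤ 1 := G_le_one hG hi hJm
  unfold tauOf
  constructor <;> nlinarith

lemma tau_ge (hG : IsTypeDist n m G) {J : ℕ} {ρ : ℝ} (hJ1 : 1 ≤ J) (hJm : J ≤ m)
    (hρ0 : 0 < ρ) (hρ1 : ρ ≤ 1) {i : ℕ} (hi : i ∈ Icc 1 n) :
    G i (J-1) ≤ tauOf G J ρ i := by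
  have := (hG i hi).2.2 J (by simp; omega)
  unfold tauOf; nlinarith

lemma tau_le (hG : IsTypeDist n m G) {J : ℕ} {ρ : ℝ} (hJ1 : 1 ≤ J) (hJm : J ≤ m)
    (hρ0 : 0 < ρ) (hρ1 : ρ ≤ 1) {i : ℕ} (hi : i ∈ Icc 1 n) :
    tauOf G J ρ i ≤ G i J := by
  have := (hG i hi).2.2 J (by simp; omega)
  unfold tauOf; nlinarith

lemma memP_xsF (k n : ℕ) (hk : 1 ≤ k) (τ : ℕ → ℝ)
    (hτ : ∀ i ∈ Icc 1 n, 0 ≤ τ i ∧ τ i ≤ 1) :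
    memP k n (fun i l => xsF τ k (i-1) l) (fun i l => τ i * xsF τ k (i-1) l) := by
  have hx0 : ∀ i ∈ Icc 1 n, ∀ l, 0 ≤ xsF τ k (i-1) l := by
    intro i hi l
    simp only [mem_Icc] at hi
    exact xsF_nonneg τ k (i-1) (fun i' h h' => hτ i' (by simp; omega)) l
  refine ⟨by simp [xsF], ?_, ?_, ?_⟩
  · intro l hl1 hlk; simp [xsF, Nat.ne_of_lt hlk]
  · intro i hi l hl
    simp only [mem_Icc] at hi hl
    obtain ⟨i', rfl⟩ : ∃ i', i = i' + 2 := ⟨i - 2, by omega⟩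
    have e1 : i' + 2 - 1 = i' + 1 := by omega
    have e2 : i' + 1 - 1 = i' := by omega
    dsimp only
    rw [e1, e2]
    show xsF τ k (i'+1) l = _
    simp only [xsF]
    by_cases hlk : l < k
    · simp only [if_pos hlk]; ring
    · simp only [if_neg hlk]; ring
  · intro i hi l hl
    simp only [mem_Icc] at hi
    have h1 := hτ i (by simp; omega)
    have h2 := hx0 i (by simp; omega) l
    constructor
    · exact mul_nonneg h1.1 h2
    · calc τ i * xsF τ k (i-1) l ≤ 1 * xsF τ k (i-1) l := by nlinarith
        _ = _ := one_mul _

lemma memP_unique (k n : ℕ) (hk : 1 ≤ k) (τ : ℕ → ℝ) (x y : ℕ → ℕ → ℝ)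
    (hxy : memP k n x y) (hy : ∀ i ∈ Icc 1 n, ∀ l ∈ Icc 1 k, y i l = τ i * x i l) :
    ∀ i ∈ Icc 1 n, ∀ l ∈ Icc 1 k, x i l = xsF τ k (i-1) l := by
  obtain ⟨h1, h2, h3, _⟩ := hxy
  intro i
  induction i with
  | zero => intro hi; simp at hi
  | succ i ih =>
    intro hi l hl
    simp only [mem_Icc] at hi hl
    rcases Nat.eq_zero_or_pos i with hi0 | hi0
    · subst hi0
      by_cases hlk : l = k
      · subst hlk; simpa [xsF] using h1
      · have := h2 l hl.1 (by omega)
        rw [this]; simp [xsF, hlk]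
    · have hiI : i ∈ Icc 1 n := by simp; omega
      have hrec := h3 (i+1) (by simp; omega) l (by simp; omega)
      simp only [Nat.add_sub_cancel] at hrec
      rw [hrec, hy i hiI l (by simp; omega),
          ih (by simp; omega) l (by simp; omega)]
      have hstep : ∀ l' ∈ Icc 1 k, (if l' < k then y i l' else (0:ℝ))
          = if l' < k then τ i * xsF τ k (i-1) l' else 0 := by
        intro l' hl'
        split
        · rw [hy i hiI l' hl', ih (by simp; omega) l' hl']
        · rfl
      have hite : (if l < k then y i (l+1) else (0:ℝ))
          = if l < k then τ i * xsF τ k (i-1) (l+1) else 0 := by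
        by_cases hlk : l < k
        · simp only [if_pos hlk]
          rw [hy i hiI (l+1) (by simp; omega), ih (by simp; omega) (l+1) (by simp; omega)]
        · simp [hlk]
      rw [hite]
      obtain ⟨i', rfl⟩ : ∃ i', i = i' + 1 := ⟨i - 1, by omega⟩
      have e2 : i' + 1 - 1 = i' := by omega
      rw [e2]
      show _ = xsF τ k (i'+1) l
      simp only [xsF]
      by_cases hlk : l < k
      · simp only [if_pos hlk]; ring
      · simp only [if_neg hlk]; ring


/-! ### Value of the static policy on step valuations -/

lemma min_mul_right' (a b c : ℝ) (hc : 0 ≤ c) : min (a*c) (b*c) = min a b * c := by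
  rcases le_total a b with h | h
  · rw [min_eq_left (by nlinarith), min_eq_left h]
  · rw [min_eq_right (by nlinarith), min_eq_right h]

lemma coverSum_xsF (k n : ℕ) (hG : IsTypeDist n m G) {J : ℕ} {ρ : ℝ}
    (hJ1 : 1 ≤ J) (hJm : J ≤ m) (hρ0 : 0 < ρ) (hρ1 : ρ ≤ 1) {j : ℕ} (hj : j ∈ Icc 1 m) :
    coverSum k n G j (fun i l => xsF (tauOf G J ρ) k (i-1) l)
        (fun i l => tauOf G J ρ i * xsF (tauOf G J ρ) k (i-1) l)
      = ∑ i ∈ Icc 1 n, min (tauOf G J ρ i) (G i j)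
          * ∑ l ∈ Icc 1 k, xsF (tauOf G J ρ) k (i-1) l := by
  unfold coverSum
  apply Finset.sum_congr rfl
  intro i hi
  rw [Finset.mul_sum]
  apply Finset.sum_congr rfl
  intro l hl
  have hx : 0 ≤ xsF (tauOf G J ρ) k (i-1) l := by
    simp only [mem_Icc] at hi
    exact xsF_nonneg _ k (i-1)
      (fun i' h h' => tau_mem_Icc hG hJ1 hJm hρ0 hρ1 (by simp; omega)) l
  exact min_mul_right' _ _ _ hx

lemma step_head (hG : IsTypeDist n m G) {J : ℕ} {ρ : ℝ}
    (hJ1 : 1 ≤ J) (hJm : J ≤ m) (hρ0 : 0 < ρ) (hρ1 : ρ ≤ 1)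
    {j : ℕ} (hj : j ∈ Icc 1 m) {i : ℕ} (hi : i ∈ Icc 1 n) :
    (∑ j' ∈ Icc 1 (J-1), pOf G i j' * stepv j j') + ρ * pOf G i J * stepv j J
      = min (tauOf G J ρ i) (G i j) := by
  simp only [mem_Icc] at hj
  by_cases hJj : J ≤ j
  · have h1 : ∀ j' ∈ Icc 1 (J-1), pOf G i j' * stepv j j' = pOf G i j' := by
      intro j' hj'
      simp only [mem_Icc] at hj'
      simp [stepv, (by omega : j' ≤ j)]
    have h2 : stepv j J = 1 := by simp [stepv, hJj]
    rw [Finset.sum_congr rfl h1, h2, sum_pOf hG hi (by omega : J - 1 ≤ m)]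
    have hτG : tauOf G J ρ i ≤ G i j :=
      le_trans (tau_le hG hJ1 hJm hρ0 hρ1 hi) (Gmono hG hi hJj hj.2)
    rw [min_eq_left hτG]
    unfold tauOf pOf
    ring
  · have h2 : stepv j J = 0 := by unfold stepv; rw [if_neg (by omega)]
    have h1 : ∀ j' ∈ Icc 1 (J-1), pOf G i j' * stepv j j'
        = if j' ≤ j then pOf G i j' else 0 := by
      intro j' _
      unfold stepv
      split <;> simp_all
    rw [Finset.sum_congr rfl h1, h2, Finset.sum_ite, Finset.sum_const_zero, add_zero]
    have hf : (Icc 1 (J-1)).filter (fun j' => j' ≤ j) = Icc 1 j := by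
      ext j'; simp only [mem_filter, mem_Icc]; omega
    rw [hf, sum_pOf hG hi hj.2]
    have hGτ : G i j ≤ tauOf G J ρ i :=
      le_trans (Gmono hG hi (by omega : j ≤ J - 1) (by omega)) (tau_ge hG hJ1 hJm hρ0 hρ1 hi)
    rw [min_eq_right hGτ]
    ring

lemma tau_sum (hG : IsTypeDist n m G) {J : ℕ} {ρ : ℝ}
    (hJ1 : 1 ≤ J) (hJm : J ≤ m) {i : ℕ} (hi : i ∈ Icc 1 n) :
    (∑ j' ∈ Icc 1 (J-1), pOf G i j') + ρ * pOf G i J = tauOf G J ρ i := by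
  rw [sum_pOf hG hi (by omega : J - 1 ≤ m)]
  unfold tauOf pOf
  ring

lemma ostW_step (k n : ℕ) (hG : IsTypeDist n m G) {J : ℕ} {ρ : ℝ}
    (hJ1 : 1 ≤ J) (hJm : J ≤ m) (hρ0 : 0 < ρ) (hρ1 : ρ ≤ 1)
    {j : ℕ} (hj : j ∈ Icc 1 m) {d l : ℕ} (hd : d < n) (hl : l ≠ 0) :
    ostW n m J ρ (stepv j) (pOf G) (d+1) l
      = ostW n m J ρ (stepv j) (pOf G) d l
        + min (tauOf G J ρ (n-d)) (G (n-d) j)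
        - tauOf G J ρ (n-d)
          * (ostW n m J ρ (stepv j) (pOf G) d l - ostW n m J ρ (stepv j) (pOf G) d (l-1)) := by
  have hnd : n - d ∈ Icc 1 n := by simp; omega
  show (if l = 0 then (0:ℝ) else _) = _
  rw [if_neg hl]
  set A := ostW n m J ρ (stepv j) (pOf G) d l with hA
  set B := ostW n m J ρ (stepv j) (pOf G) d (l-1) with hB
  have hpt : ∀ j' ∈ Icc 1 (J-1),
      pOf G (n-d) j' * (stepv j j' - (A - B))
        = pOf G (n-d) j' * stepv j j' - pOf G (n-d) j' * (A - B) := by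
    intro j' _; ring
  rw [Finset.sum_congr rfl hpt, Finset.sum_sub_distrib, ← Finset.sum_mul]
  have h1 := step_head hG hJ1 hJm hρ0 hρ1 hj hnd
  have h2 := tau_sum hG hJ1 hJm (ρ := ρ) hnd
  linear_combination h1 + (B - A) * h2


noncomputable def Wfun (k n m J : ℕ) (ρ : ℝ) (G : ℕ → ℕ → ℝ) (j i l : ℕ) : ℝ :=
  ostW n m J ρ (stepv j) (pOf G) (n+1-i) l

noncomputable def Phi (k n m J : ℕ) (ρ : ℝ) (G : ℕ → ℕ → ℝ) (j i : ℕ) : ℝ :=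
  ∑ l ∈ Icc 1 k, xsF (tauOf G J ρ) k (i-1) l * Wfun k n m J ρ G j i l

lemma Phi_step (k n : ℕ) (hk : 1 ≤ k) (hG : IsTypeDist n m G) {J : ℕ} {ρ : ℝ}
    (hJ1 : 1 ≤ J) (hJm : J ≤ m) (hρ0 : 0 < ρ) (hρ1 : ρ ≤ 1)
    {j : ℕ} (hj : j ∈ Icc 1 m) {i : ℕ} (h1i : 1 ≤ i) (hin : i ≤ n) :
    Phi k n m J ρ G j i
      = min (tauOf G J ρ i) (G i j) * (∑ l ∈ Icc 1 k, xsF (tauOf G J ρ) k (i-1) l)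
        + Phi k n m J ρ G j (i+1) := by
  set τf := tauOf G J ρ with hτf
  set μ := min (τf i) (G i j) with hμ
  have hW : ∀ l, l ≠ 0 → Wfun k n m J ρ G j i l
      = Wfun k n m J ρ G j (i+1) l + μ
        - τf i * (Wfun k n m J ρ G j (i+1) l - Wfun k n m J ρ G j (i+1) (l-1)) := by
    intro l hl
    unfold Wfun
    rw [show n + 1 - i = (n - i) + 1 by omega, show n + 1 - (i+1) = n - i by omega]
    have := ostW_step k n hG hJ1 hJm hρ0 hρ1 hj (d := n - i) (l := l) (by omega) hl
    rw [this, show n - (n - i) = i by omega]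
  unfold Phi
  have hpt : ∀ l ∈ Icc 1 k, xsF τf k (i-1) l * Wfun k n m J ρ G j i l
      = μ * xsF τf k (i-1) l
        + (1 - τf i) * xsF τf k (i-1) l * Wfun k n m J ρ G j (i+1) l
        + τf i * (xsF τf k (i-1) l * Wfun k n m J ρ G j (i+1) (l-1)) := by
    intro l hl
    simp only [mem_Icc] at hl
    rw [hW l (by omega)]
    ring
  rw [Finset.sum_congr rfl hpt, Finset.sum_add_distrib, Finset.sum_add_distrib,
      ← Finset.mul_sum, ← Finset.mul_sum]
  have hS3 : ∑ l ∈ Icc 1 k, xsF τf k (i-1) l * Wfun k n m J ρ G j (i+1) (l-1)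
      = ∑ l ∈ Icc 1 (k-1), xsF τf k (i-1) (l+1) * Wfun k n m J ρ G j (i+1) l := by
    rw [Finset.Icc_eq_cons_Ioc hk, Finset.sum_cons]
    have h0 : Wfun k n m J ρ G j (i+1) (1-1) = 0 := by
      unfold Wfun; exact ostW_l0 _ _ _ _ _ _ _
    rw [h0, mul_zero, zero_add, ← Finset.Icc_add_one_left_eq_Ioc,
        show Icc (1+1) k = Finset.image (· + 1) (Icc 1 (k-1)) by
          rw [Finset.image_add_right_Icc]; congr 1; omega,
        Finset.sum_image (by intro a _ b _ h; simp only at h; omega)]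
    rfl
  have hS4 : ∑ l ∈ Icc 1 (k-1), xsF τf k (i-1) (l+1) * Wfun k n m J ρ G j (i+1) l
      = ∑ l ∈ Icc 1 k, (if l < k then xsF τf k (i-1) (l+1) else 0) * Wfun k n m J ρ G j (i+1) l := by
    rw [← Finset.sum_subset (Finset.Icc_subset_Icc_right (by omega : k - 1 ≤ k))
        (by intro l hl hl2; simp only [mem_Icc] at hl hl2; rw [if_neg (by omega), zero_mul])]
    apply Finset.sum_congr rfl
    intro l hl
    simp only [mem_Icc] at hl
    rw [if_pos (by omega : l < k)]
  have hmerge : (∑ l ∈ Icc 1 k, (1 - τf i) * xsF τf k (i-1) l * Wfun k n m J ρ G j (i+1) l)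
      + τf i * ∑ l ∈ Icc 1 k, (if l < k then xsF τf k (i-1) (l+1) else 0) * Wfun k n m J ρ G j (i+1) l
      = ∑ l ∈ Icc 1 k, xsF τf k i l * Wfun k n m J ρ G j (i+1) l := by
    rw [Finset.mul_sum, ← Finset.sum_add_distrib]
    apply Finset.sum_congr rfl
    intro l hl
    have hx : xsF τf k i l
        = (1 - τf i) * xsF τf k (i-1) l
          + τf i * (if l < k then xsF τf k (i-1) (l+1) else 0) := by
      conv_lhs => rw [show i = (i-1)+1 by omega]
      simp only [xsF]
      rw [show (i-1)+1 = i by omega]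
    rw [hx]
    ring
  rw [hS3, hS4, add_assoc, hmerge]
  rfl


lemma Phi_telescope (k n : ℕ) (hk : 1 ≤ k) (hG : IsTypeDist n m G) {J : ℕ} {ρ : ℝ}
    (hJ1 : 1 ≤ J) (hJm : J ≤ m) (hρ0 : 0 < ρ) (hρ1 : ρ ≤ 1) {j : ℕ} (hj : j ∈ Icc 1 m) :
    ∀ d, d ≤ n → Phi k n m J ρ G j (n+1-d)
      = ∑ i ∈ Icc (n+1-d) n, min (tauOf G J ρ i) (G i j)
          * ∑ l ∈ Icc 1 k, xsF (tauOf G J ρ) k (i-1) l := by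
  intro d
  induction d with
  | zero =>
    intro _
    rw [show n+1-0 = n+1 by omega, Finset.Icc_eq_empty (by omega), Finset.sum_empty]
    unfold Phi
    apply Finset.sum_eq_zero
    intro l _
    have : Wfun k n m J ρ G j (n+1) l = 0 := by
      unfold Wfun
      rw [show n+1-(n+1) = 0 by omega]
      rfl
    rw [this, mul_zero]
  | succ d ih =>
    intro hd
    rw [show n+1-(d+1) = n - d by omega]
    rw [Phi_step k n hk hG hJ1 hJm hρ0 hρ1 hj (by omega : 1 ≤ n - d) (by omega : n - d ≤ n)]
    rw [show n - d + 1 = n + 1 - d by omega, ih (by omega)]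
    rw [Finset.Icc_eq_cons_Ioc (by omega : n - d ≤ n), Finset.sum_cons, ← Finset.Icc_add_one_left_eq_Ioc,
        show n - d + 1 = n + 1 - d by omega]

lemma OSTval_step_eq (k n : ℕ) (hk : 1 ≤ k) (hn : 1 ≤ n) (hG : IsTypeDist n m G)
    {J : ℕ} {ρ : ℝ} (hJ1 : 1 ≤ J) (hJm : J ≤ m) (hρ0 : 0 < ρ) (hρ1 : ρ ≤ 1)
    {j : ℕ} (hj : j ∈ Icc 1 m) :
    OSTval k n m J ρ (stepv j) (pOf G)
      = ∑ i ∈ Icc 1 n, min (tauOf G J ρ i) (G i j)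
          * ∑ l ∈ Icc 1 k, xsF (tauOf G J ρ) k (i-1) l := by
  have htel := Phi_telescope k n hk hG hJ1 hJm hρ0 hρ1 hj n le_rfl
  rw [show n+1-n = 1 by omega] at htel
  rw [← htel]
  unfold Phi
  have hpt : ∀ l ∈ Icc 1 k, xsF (tauOf G J ρ) k (1-1) l * Wfun k n m J ρ G j 1 l
      = if l = k then Wfun k n m J ρ G j 1 l else 0 := by
    intro l _
    show (if l = k then (1:ℝ) else 0) * _ = _
    split <;> simp
  rw [Finset.sum_congr rfl hpt, Finset.sum_ite_eq' (Icc 1 k) k, if_pos (by simp [hk])]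
  unfold OSTval Wfun
  rw [show n+1-1 = n by omega]


lemma innerLP_set_eq (k n : ℕ) (hk : 1 ≤ k) (hn : 1 ≤ n) (hG : IsTypeDist n m G)
    {J : ℕ} {ρ : ℝ} (hJ1 : 1 ≤ J) (hJm : J ≤ m) (hρ0 : 0 < ρ) (hρ1 : ρ ≤ 1) (Q : ℕ → ℝ) :
    {θ : ℝ | ∃ x y, memP k n x y ∧
        (∀ i ∈ Icc 1 n, ∀ l ∈ Icc 1 k, y i l = tauOf G J ρ i * x i l) ∧
        ∀ j ∈ Icc 1 m, θ * Q j ≤ coverSum k n G j x y}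
      = {θ : ℝ | ∀ j ∈ Icc 1 m, θ * Q j ≤ OSTval k n m J ρ (stepv j) (pOf G)} := by
  have hτ : ∀ i ∈ Icc 1 n, 0 ≤ tauOf G J ρ i ∧ tauOf G J ρ i ≤ 1 :=
    fun i hi => tau_mem_Icc hG hJ1 hJm hρ0 hρ1 hi
  have hcover : ∀ j ∈ Icc 1 m,
      coverSum k n G j (fun i l => xsF (tauOf G J ρ) k (i-1) l)
        (fun i l => tauOf G J ρ i * xsF (tauOf G J ρ) k (i-1) l)
      = OSTval k n m J ρ (stepv j) (pOf G) := by
    intro j hj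
    rw [coverSum_xsF k n hG hJ1 hJm hρ0 hρ1 hj,
        OSTval_step_eq k n hk hn hG hJ1 hJm hρ0 hρ1 hj]
  ext θ
  simp only [Set.mem_setOf_eq]
  constructor
  · rintro ⟨x, y, hmem, hy, hcons⟩
    intro j hj
    refine le_trans (hcons j hj) (le_of_eq ?_)
    rw [← hcover j hj]
    unfold coverSum
    apply Finset.sum_congr rfl
    intro i hi
    apply Finset.sum_congr rfl
    intro l hl
    rw [hy i hi l hl, memP_unique k n hk (tauOf G J ρ) x y hmem hy i hi l hl]
  · intro hcons
    refine ⟨_, _, memP_xsF k n hk (tauOf G J ρ) hτ, fun i _ l _ => rfl, ?_⟩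
    intro j hj
    rw [hcover j hj]
    exact hcons j hj

lemma OSTval_step_nonneg (k n : ℕ) (hk : 1 ≤ k) (hn : 1 ≤ n) (hG : IsTypeDist n m G)
    {J : ℕ} {ρ : ℝ} (hJ1 : 1 ≤ J) (hJm : J ≤ m) (hρ0 : 0 < ρ) (hρ1 : ρ ≤ 1)
    {j : ℕ} (hj : j ∈ Icc 1 m) :
    0 ≤ OSTval k n m J ρ (stepv j) (pOf G) := by
  rw [OSTval_step_eq k n hk hn hG hJ1 hJm hρ0 hρ1 hj]
  apply Finset.sum_nonneg
  intro i hi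
  simp only [mem_Icc] at hi hj
  apply mul_nonneg
  · exact le_min (tau_mem_Icc hG hJ1 hJm hρ0 hρ1 (by simp; omega)).1
      (G_nonneg hG (by simp; omega) hj.2)
  · apply Finset.sum_nonneg
    intro l _
    exact xsF_nonneg _ k (i-1)
      (fun i' h h' => tau_mem_Icc hG hJ1 hJm hρ0 hρ1 (by simp; omega)) l

lemma key_lemma (k n : ℕ) (hk : 1 ≤ k) (hkn : k < n) (hm : 1 ≤ m) (hG : IsTypeDist n m G)
    {J : ℕ} {ρ : ℝ} (hJ : J ∈ Icc 1 m) (hρ : ρ ∈ Set.Ioc (0:ℝ) 1)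
    (Q : ℕ → ℝ) (D : (ℕ → ℝ) → ℝ)
    (hQ0 : ∀ j ∈ Icc 1 m, 0 ≤ Q j) (hQm : 0 < Q m)
    (hD : ∀ r, IsValuation m r → D r = ∑ j ∈ Icc 1 m, cOf m r j * Q j) :
    sInf {u : ℝ | ∃ r : ℕ → ℝ, IsValuation m r ∧ 0 < D r ∧
        u = OSTval k n m J ρ r (pOf G) / D r}
      = innerLP_OST k n m G J ρ Q := by
  simp only [mem_Icc] at hJ
  obtain ⟨hρ0, hρ1⟩ := hρ
  have hn : 1 ≤ n := by omega
  set V : ℕ → ℝ := fun j => OSTval k n m J ρ (stepv j) (pOf G) with hVdef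
  have hV0 : ∀ j ∈ Icc 1 m, 0 ≤ V j :=
    fun j hj => OSTval_step_nonneg k n hk hn hG hJ.1 hJ.2 hρ0 hρ1 hj
  have hN : ∀ r : ℕ → ℝ, OSTval k n m J ρ r (pOf G) = ∑ j ∈ Icc 1 m, cOf m r j * V j :=
    fun r => OSTval_decomp k n m J ρ r (pOf G) hJ.1 hJ.2
  have hDstep : ∀ j0 ∈ Icc 1 m, D (stepv j0) = Q j0 := by
    intro j0 hj0
    rw [hD _ (stepv_isValuation j0)]
    rw [Finset.sum_congr rfl (fun j hj => by rw [cOf_stepv hj0 hj])]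
    have : ∀ j ∈ Icc 1 m, (if j = j0 then (1:ℝ) else 0) * Q j
        = if j = j0 then Q j else 0 := by
      intro j _; split <;> simp
    rw [Finset.sum_congr rfl this, Finset.sum_ite_eq' (Icc 1 m) j0, if_pos hj0]
  set A := {u : ℝ | ∃ r : ℕ → ℝ, IsValuation m r ∧ 0 < D r ∧
      u = OSTval k n m J ρ r (pOf G) / D r} with hAdef
  have hmm : m ∈ Icc 1 m := by simp [hm]
  have hmemA : ∀ j0 ∈ Icc 1 m, 0 < Q j0 → V j0 / Q j0 ∈ A := by
    intro j0 hj0 hQj0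
    refine ⟨stepv j0, stepv_isValuation j0, ?_, ?_⟩
    · rw [hDstep j0 hj0]; exact hQj0
    · rw [hDstep j0 hj0]
  have hAne : A.Nonempty := ⟨_, hmemA m hmm hQm⟩
  have hA0 : ∀ u ∈ A, 0 ≤ u := by
    rintro u ⟨r, hr, hDr, rfl⟩
    apply div_nonneg _ (le_of_lt hDr)
    rw [hN r]
    exact Finset.sum_nonneg fun j hj => mul_nonneg (cOf_nonneg hr hj) (hV0 j hj)
  have hAbdd : BddBelow A := ⟨0, fun u hu => hA0 u hu⟩
  rw [show innerLP_OST k n m G J ρ Q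
      = sSup {θ : ℝ | ∀ j ∈ Icc 1 m, θ * Q j ≤ V j} by
    unfold innerLP_OST
    rw [innerLP_set_eq k n hk hn hG hJ.1 hJ.2 hρ0 hρ1 Q]]
  set B := {θ : ℝ | ∀ j ∈ Icc 1 m, θ * Q j ≤ V j} with hBdef
  have hlb : ∀ θ ∈ B, ∀ u ∈ A, θ ≤ u := by
    intro θ hθ u hu
    obtain ⟨r, hr, hDr, rfl⟩ := hu
    rw [le_div_iff₀ hDr, hD r hr, hN r, Finset.mul_sum]
    apply Finset.sum_le_sum
    intro j hj
    have h1 := hθ j hj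
    have h2 := cOf_nonneg hr hj
    calc θ * (cOf m r j * Q j) = cOf m r j * (θ * Q j) := by ring
      _ ≤ cOf m r j * V j := by nlinarith
  have hBne : B.Nonempty := ⟨0, fun j hj => by simpa using hV0 j hj⟩
  have hBbdd : BddAbove B := by
    refine ⟨V m / Q m, fun θ hθ => ?_⟩
    rw [le_div_iff₀ hQm]
    exact hθ m hmm
  have hInfMem : sInf A ∈ B := by
    intro j hj
    rcases lt_or_eq_of_le (hQ0 j hj) with hQj | hQj
    · rw [← le_div_iff₀ hQj]
      exact csInf_le hAbdd (hmemA j hj hQj)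
    · rw [← hQj, mul_zero]
      exact hV0 j hj
  apply le_antisymm
  · exact le_csSup hBbdd hInfMem
  · exact csSup_le hBne fun θ hθ => le_csInf hAne fun u hu => hlb θ hθ u hu


/-! ### The ex-ante relaxation on valuations -/

lemma abel_shift (r b : ℕ → ℝ) (hm : 1 ≤ m) (hb0 : b 0 = 0) :
    ∑ j ∈ Icc 1 m, r j * b (j-1)
      = ∑ j ∈ Icc 1 m, (if j < m then r (j+1) else 0) * b j := by
  have h1 : ∑ j ∈ Icc 1 m, r j * b (j-1) = ∑ j ∈ Ioc 1 m, r j * b (j-1) := by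
    rw [Finset.Icc_eq_cons_Ioc hm, Finset.sum_cons]
    simp [hb0]
  rw [h1, ← Finset.Icc_add_one_left_eq_Ioc,
      show Icc (1+1) m = Finset.image (· + 1) (Icc 1 (m-1)) by
        rw [Finset.image_add_right_Icc]; congr 1; omega,
      Finset.sum_image (by intro a _ b _ h; simp only at h; omega)]
  rw [← Finset.sum_subset (Finset.Icc_subset_Icc_right (by omega : m - 1 ≤ m))
      (by intro j hj hj2; simp only [mem_Icc] at hj hj2; rw [if_neg (by omega), zero_mul])]
  apply Finset.sum_congr rfl
  intro j hj
  simp only [mem_Icc] at hj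
  rw [if_pos (by omega : j < m)]
  rfl

lemma ExAnte_eq (k n : ℕ) (hk : 1 ≤ k) (hkn : k < n) (hm : 1 ≤ m) (hG : IsTypeDist n m G)
    (r : ℕ → ℝ) (hr : IsValuation m r) :
    ExAnte k n m r (pOf G) = ∑ j ∈ Icc 1 m, cOf m r j * QExAnte k n G j := by
  set A : ℕ → ℝ := fun j => ∑ i ∈ Icc 1 n, G i j with hAdef
  set b : ℕ → ℝ := fun j => min (A j) (k:ℝ) with hbdef
  have hQb : ∀ j, QExAnte k n G j = b j := fun j => rfl
  have hb0 : b 0 = 0 := by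
    have : A 0 = 0 := Finset.sum_eq_zero fun i hi => (hG i hi).1
    simp only [hbdef, this]
    exact min_eq_left (by positivity)
  have hAmono : ∀ j ∈ Icc 1 m, A (j-1) ≤ A j :=
    fun j hj => Finset.sum_le_sum fun i hi => (hG i hi).2.2 j hj
  have hsub : ∀ j ∈ Icc 1 m, ∑ i ∈ Icc 1 n, pOf G i j = A j - A (j-1) := by
    intro j _
    simp only [hAdef, pOf, Finset.sum_sub_distrib]
  have hswap : ∀ j0 ∈ Icc 1 m, ∑ j ∈ Icc 1 j0, ∑ i ∈ Icc 1 n, pOf G i j = A j0 := by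
    intro j0 hj0
    simp only [mem_Icc] at hj0
    rw [Finset.sum_comm]
    exact Finset.sum_congr rfl fun i hi => sum_pOf hG hi hj0.2
  apply IsGreatest.csSup_eq
  constructor
  · -- membership: the greedy witness
    refine ⟨fun j => b j - b (j-1), ?_, ?_, ?_⟩
    · intro j hj
      simp only [mem_Icc] at hj
      have h1 : A (j-1) ≤ A j := hAmono j (by simp; omega)
      constructor
      · simp only [hbdef]
        have := min_le_min h1 (le_refl (k:ℝ))
        linarith [min_le_min h1 (le_refl (k:ℝ))]
      · rw [hsub j (by simp; omega)]
        have hd : 0 ≤ A j - A (j-1) := by linarith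
        have : min (A j) (k:ℝ) ≤ min (A (j-1) + (A j - A (j-1))) ((k:ℝ) + (A j - A (j-1))) :=
          min_le_min (by linarith) (by linarith)
        rw [min_add_add_right] at this
        simp only [hbdef]
        linarith
    · have : ∑ j ∈ Icc 1 m, (b j - b (j-1)) = b m - b 0 := by
        have := tele1 b m 0 (by omega)
        simpa using this
      rw [this, hb0, sub_zero]
      exact min_le_right _ _
    · have habel : ∑ j ∈ Icc 1 m, r j * (b j - b (j-1))
          = ∑ j ∈ Icc 1 m, cOf m r j * b j := by
        have e1 : ∀ j ∈ Icc 1 m, r j * (b j - b (j-1)) = r j * b j - r j * b (j-1) :=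
          fun j _ => by ring
        have e2 : ∀ j ∈ Icc 1 m, cOf m r j * b j
            = r j * b j - (if j < m then r (j+1) else 0) * b j := by
          intro j _; unfold cOf; ring
        rw [Finset.sum_congr rfl e1, Finset.sum_congr rfl e2,
            Finset.sum_sub_distrib, Finset.sum_sub_distrib, abel_shift r b hm hb0]
      rw [habel]
      exact Finset.sum_congr rfl fun j hj => by rw [hQb]
  · -- upper bound
    rintro s ⟨a, ha, hak, rfl⟩
    have hexp : ∀ j ∈ Icc 1 m, r j * a j
        = ∑ j0 ∈ Icc 1 m, (if j ≤ j0 then cOf m r j0 * a j else 0) := by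
      intro j hj
      simp only [mem_Icc] at hj
      rw [Finset.sum_ite, Finset.sum_const_zero, add_zero,
          show (Icc 1 m).filter (fun j0 => j ≤ j0) = Icc j m by
            ext j0; simp only [mem_filter, mem_Icc]; omega,
          ← Finset.sum_mul, sum_cOf r hj.1 hj.2]
    rw [Finset.sum_congr rfl hexp, Finset.sum_comm]
    apply Finset.sum_le_sum
    intro j0 hj0
    have hj0' := hj0
    simp only [mem_Icc] at hj0'
    have hinner : ∑ j ∈ Icc 1 m, (if j ≤ j0 then cOf m r j0 * a j else 0)
        = cOf m r j0 * ∑ j ∈ Icc 1 j0, a j := by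
      rw [Finset.sum_ite, Finset.sum_const_zero, add_zero,
          show (Icc 1 m).filter (fun j => j ≤ j0) = Icc 1 j0 by
            ext j; simp only [mem_filter, mem_Icc]; omega,
          Finset.mul_sum]
    rw [hinner]
    have hbound : ∑ j ∈ Icc 1 j0, a j ≤ QExAnte k n G j0 := by
      rw [hQb]
      apply le_min
      · calc ∑ j ∈ Icc 1 j0, a j ≤ ∑ j ∈ Icc 1 j0, ∑ i ∈ Icc 1 n, pOf G i j := by
              apply Finset.sum_le_sum
              intro j hj
              simp only [mem_Icc] at hj
              exact (ha j (by simp; omega)).2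
          _ = A j0 := hswap j0 hj0
      · calc ∑ j ∈ Icc 1 j0, a j ≤ ∑ j ∈ Icc 1 m, a j := by
              apply Finset.sum_le_sum_of_subset_of_nonneg
                (Finset.Icc_subset_Icc_right hj0'.2)
              intro j hj _
              exact (ha j hj).1
          _ ≤ (k:ℝ) := hak
    have hc := cOf_nonneg hr hj0
    nlinarith [hbound, hc]


/-! ### The prophet value on valuations -/

lemma prophVal_layer (k n : ℕ) (hk : 1 ≤ k) (hkn : k ≤ n) (hm : 1 ≤ m)
    (r : ℕ → ℝ) (hr : IsValuation m r) (t : Fin n → ℕ) (ht : ∀ i, t i ∈ Icc 1 m) :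
    prophVal n k (fun i => r (t i))
      = ∑ j ∈ Icc 1 m, cOf m r j
          * min (((Finset.univ.filter (fun i => t i ≤ j)).card : ℝ)) (k:ℝ) := by
  classical
  set T : ℕ → Finset (Fin n) := fun j => Finset.univ.filter (fun i => t i ≤ j) with hTdef
  have hT0 : T 0 = ∅ := by
    ext i
    simp only [hTdef, Finset.mem_filter, Finset.mem_univ, true_and, Finset.notMem_empty,
      iff_false]
    have := ht i; simp only [mem_Icc] at this; omega
  have hTmono : ∀ {j j' : ℕ}, j' ≤ j → T j' ⊆ T j := by
    intro j j' hjj i hi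
    simp only [hTdef, Finset.mem_filter, Finset.mem_univ, true_and] at hi ⊢
    omega
  have hTm : T m = Finset.univ := by
    ext i
    simp only [hTdef, Finset.mem_filter, Finset.mem_univ, true_and, iff_true]
    have := ht i; simp only [mem_Icc] at this; omega
  have chain : ∀ j, ∃ S : Finset (Fin n), S ⊆ T j ∧ S.card = min (T j).card k ∧
      ∀ j' ≤ j, min (T j').card k ≤ (S ∩ T j').card := by
    intro j
    induction j with
    | zero =>
      refine ⟨∅, Finset.empty_subset _, by simp [hT0], ?_⟩
      intro j' hj'
      interval_cases j'
      simp [hT0]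
    | succ j ih =>
      obtain ⟨S, hS1, hS2, hS3⟩ := ih
      have hsub : S ⊆ T (j+1) := hS1.trans (hTmono (by omega))
      have hcard : S.card ≤ min (T (j+1)).card k := by
        rw [hS2]
        exact min_le_min (Finset.card_le_card (hTmono (by omega))) le_rfl
      obtain ⟨U, hU1, hU2, hU3⟩ := Finset.exists_subsuperset_card_eq hsub hcard
        (min_le_left _ _)
      refine ⟨U, hU2, hU3, ?_⟩
      intro j' hj'
      rcases Nat.lt_or_ge j' (j+1) with h | h
      · calc min (T j').card k ≤ (S ∩ T j').card := hS3 j' (by omega)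
          _ ≤ (U ∩ T j').card :=
            Finset.card_le_card (Finset.inter_subset_inter hU1 le_rfl)
      · have : j' = j + 1 := by omega
        subst this
        rw [Finset.inter_eq_left.mpr hU2, hU3]
  have hval : ∀ S : Finset (Fin n), ∑ i ∈ S, r (t i)
      = ∑ j ∈ Icc 1 m, cOf m r j * ((S.filter (fun i => t i ≤ j)).card : ℝ) := by
    intro S
    have hpt : ∀ i ∈ S, r (t i)
        = ∑ j ∈ Icc 1 m, cOf m r j * (if t i ≤ j then (1:ℝ) else 0) := by
      intro i _
      have hti := ht i; simp only [mem_Icc] at hti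
      have : ∀ j ∈ Icc 1 m, cOf m r j * (if t i ≤ j then (1:ℝ) else 0)
          = if t i ≤ j then cOf m r j else 0 := by
        intro j _; split <;> simp
      rw [Finset.sum_congr rfl this, Finset.sum_ite, Finset.sum_const_zero, add_zero,
          show (Icc 1 m).filter (fun j => t i ≤ j) = Icc (t i) m by
            ext j; simp only [mem_filter, mem_Icc]; omega,
          sum_cOf r hti.1 hti.2]
    rw [Finset.sum_congr rfl hpt, Finset.sum_comm]
    apply Finset.sum_congr rfl
    intro j _
    rw [← Finset.mul_sum, Finset.sum_boole]
  have hub : ∀ S : Finset (Fin n), S.card ≤ k → ∑ i ∈ S, r (t i)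
      ≤ ∑ j ∈ Icc 1 m, cOf m r j * min (((T j).card : ℝ)) (k:ℝ) := by
    intro S hSk
    rw [hval S]
    apply Finset.sum_le_sum
    intro j hj
    have hc := cOf_nonneg hr hj
    have h1 : ((S.filter (fun i => t i ≤ j)).card : ℝ) ≤ min (((T j).card : ℝ)) (k:ℝ) := by
      apply le_min
      · exact_mod_cast Nat.cast_le.mpr (Finset.card_le_card
          (fun i hi => by
            simp only [hTdef, Finset.mem_filter, Finset.mem_univ, true_and]
            exact (Finset.mem_filter.mp hi).2))
      · exact_mod_cast Nat.cast_le.mpr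
          (le_trans (Finset.card_le_card (Finset.filter_subset _ S)) hSk)
    nlinarith
  apply IsGreatest.csSup_eq
  constructor
  · obtain ⟨S, hS1, hS2, hS3⟩ := chain m
    have hcardTm : (T m).card = n := by rw [hTm, Finset.card_univ, Fintype.card_fin]
    have hSk : S.card = k := by rw [hS2, hcardTm, Nat.min_eq_right hkn]
    refine ⟨S, le_of_eq hSk, ?_⟩
    rw [hval S]
    apply Finset.sum_congr rfl
    intro j hj
    simp only [mem_Icc] at hj
    have hfe : S.filter (fun i => t i ≤ j) = S ∩ T j := by
      ext i
      simp only [Finset.mem_filter, Finset.mem_inter, hTdef, Finset.mem_univ, true_and]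
    have hcardeq : (S ∩ T j).card = min (T j).card k := by
      apply le_antisymm
      · exact le_min (Finset.card_le_card Finset.inter_subset_right)
          (le_trans (Finset.card_le_card Finset.inter_subset_left) (le_of_eq hSk))
      · exact hS3 j hj.2
    rw [hfe, hcardeq]
    congr 1
    rw [Nat.cast_min]
  · rintro s ⟨S, hSk, rfl⟩
    exact hub S hSk


/-! ### Expected prophet value of step valuations -/

lemma powerset_reindex (n : ℕ) (f g : ℕ → ℝ) (h : ℕ → ℝ) :
    ∑ S ∈ (Finset.univ : Finset (Fin n)).powerset,
        (∏ i ∈ S, f (i.1+1)) * (∏ i ∈ Finset.univ \ S, g (i.1+1)) * h S.card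
      = ∑ T ∈ (Icc 1 n).powerset,
        (∏ a ∈ T, f a) * (∏ a ∈ Icc 1 n \ T, g a) * h T.card := by
  classical
  have hinj : Function.Injective (fun i : Fin n => i.1 + 1) := by
    intro a b hab
    simp only at hab
    exact Fin.ext (by omega)
  set e : Fin n ↪ ℕ := ⟨fun i => i.1 + 1, hinj⟩ with hedef
  have hmapsub : ∀ S : Finset (Fin n), S.map e ⊆ Icc 1 n := by
    intro S a ha
    simp only [Finset.mem_map, hedef, Function.Embedding.coeFn_mk] at ha
    obtain ⟨i, _, rfl⟩ := ha
    simp only [mem_Icc]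
    exact ⟨by omega, by omega⟩
  apply Finset.sum_bij (fun (S : Finset (Fin n)) (_ : S ∈ (Finset.univ : Finset (Fin n)).powerset)
    => S.map e)
  · intro S _
    exact Finset.mem_powerset.mpr (hmapsub S)
  · intro S1 h1 S2 h2 heq
    exact Finset.map_injective e heq
  · intro T hT
    have hTsub := Finset.mem_powerset.mp hT
    refine ⟨Finset.univ.filter (fun i => (i.1+1) ∈ T), Finset.mem_powerset.mpr
      (Finset.subset_univ _), ?_⟩
    ext a
    simp only [Finset.mem_map, Finset.mem_filter, Finset.mem_univ, true_and, hedef,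
      Function.Embedding.coeFn_mk]
    constructor
    · rintro ⟨i, hi, rfl⟩; exact hi
    · intro ha
      have haI : a ∈ Icc 1 n := hTsub ha
      simp only [mem_Icc] at haI
      exact ⟨⟨a - 1, by omega⟩, by simpa [show a - 1 + 1 = a by omega] using ha,
        by simp; omega⟩
  · intro S _
    have hcomp : Icc 1 n \ S.map e = (Finset.univ \ S).map e := by
      ext a
      simp only [Finset.mem_sdiff, Finset.mem_map, Finset.mem_univ, true_and, hedef,
        Function.Embedding.coeFn_mk, mem_Icc]
      constructor
      · rintro ⟨⟨ha1, ha2⟩, hnot⟩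
        refine ⟨⟨a - 1, by omega⟩, ?_, by simp; omega⟩
        intro hmem
        exact hnot ⟨⟨a-1, by omega⟩, hmem, by simp; omega⟩
      · rintro ⟨i, hi, rfl⟩
        refine ⟨⟨by omega, by omega⟩, ?_⟩
        rintro ⟨i', hi', heq⟩
        have : i' = i := hinj (by simpa using heq)
        subst this
        exact hi hi'
    rw [Finset.prod_map, Finset.card_map, hcomp, Finset.prod_map]
    rfl

lemma sum_piFinset_min (k n : ℕ) (hG : IsTypeDist n m G) {j : ℕ} (hj : j ∈ Icc 1 m) :
    ∑ t ∈ Fintype.piFinset (fun _ : Fin n => Icc 1 m),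
        (∏ i : Fin n, pOf G (i.1+1) (t i))
          * min (((Finset.univ.filter (fun i => t i ≤ j)).card : ℝ)) (k:ℝ)
      = QProph k n G j := by
  classical
  simp only [mem_Icc] at hj
  have hmaps : ∀ t ∈ Fintype.piFinset (fun _ : Fin n => Icc 1 m),
      Finset.univ.filter (fun i => t i ≤ j) ∈ (Finset.univ : Finset (Fin n)).powerset :=
    fun t _ => Finset.mem_powerset.mpr (Finset.subset_univ _)
  rw [← Finset.sum_fiberwise_of_maps_to hmaps]
  have hfiber : ∀ S : Finset (Fin n),
      (Fintype.piFinset (fun _ : Fin n => Icc 1 m)).filter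
          (fun t => Finset.univ.filter (fun i => t i ≤ j) = S)
        = Fintype.piFinset (fun i => if i ∈ S then Icc 1 j else Icc (j+1) m) := by
    intro S
    ext t
    simp only [Finset.mem_filter, Fintype.mem_piFinset, mem_Icc]
    constructor
    · rintro ⟨h1, h2⟩ i
      have hiff : t i ≤ j ↔ i ∈ S := by
        rw [← h2]; simp
      by_cases hi : i ∈ S
      · rw [if_pos hi]
        have := hiff.mpr hi
        have := h1 i
        simp only [mem_Icc]
        omega
      · rw [if_neg hi]
        have h3 : ¬ (t i ≤ j) := fun hcon => hi (hiff.mp hcon)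
        have := h1 i
        simp only [mem_Icc]
        omega
    · intro h
      have key : ∀ i, (1 ≤ t i ∧ t i ≤ m) ∧ (t i ≤ j ↔ i ∈ S) := by
        intro i
        have := h i
        by_cases hi : i ∈ S
        · rw [if_pos hi] at this
          simp only [mem_Icc] at this
          exact ⟨⟨this.1, by omega⟩, by simp [hi]; omega⟩
        · rw [if_neg hi] at this
          simp only [mem_Icc] at this
          exact ⟨⟨by omega, this.2⟩, by simp [hi]; omega⟩
      refine ⟨fun i => (key i).1, ?_⟩
      ext i
      simp only [Finset.mem_filter, Finset.mem_univ, true_and]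
      exact (key i).2
  have hinner : ∀ S ∈ (Finset.univ : Finset (Fin n)).powerset,
      ∑ t ∈ (Fintype.piFinset (fun _ : Fin n => Icc 1 m)).filter
          (fun t => Finset.univ.filter (fun i => t i ≤ j) = S),
        (∏ i : Fin n, pOf G (i.1+1) (t i))
          * min (((Finset.univ.filter (fun i => t i ≤ j)).card : ℝ)) (k:ℝ)
      = (∏ i ∈ S, G (i.1+1) j) * (∏ i ∈ Finset.univ \ S, (1 - G (i.1+1) j))
          * min ((S.card : ℝ)) (k:ℝ) := by
    intro S _
    have hcongr : ∀ t ∈ (Fintype.piFinset (fun _ : Fin n => Icc 1 m)).filter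
        (fun t => Finset.univ.filter (fun i => t i ≤ j) = S),
        (∏ i : Fin n, pOf G (i.1+1) (t i))
          * min (((Finset.univ.filter (fun i => t i ≤ j)).card : ℝ)) (k:ℝ)
        = (∏ i : Fin n, pOf G (i.1+1) (t i)) * min ((S.card : ℝ)) (k:ℝ) := by
      intro t htf
      rw [(Finset.mem_filter.mp htf).2]
    rw [Finset.sum_congr rfl hcongr, ← Finset.sum_mul, hfiber S]
    congr 1
    rw [← Finset.prod_univ_sum]
    have hprod : ∀ i : Fin n,
        (∑ j' ∈ (if i ∈ S then Icc 1 j else Icc (j+1) m), pOf G (i.1+1) j')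
        = if i ∈ S then G (i.1+1) j else 1 - G (i.1+1) j := by
      intro i
      have hiI : (i.1+1) ∈ Icc 1 n := by simp only [mem_Icc]; omega
      by_cases hi : i ∈ S
      · rw [if_pos hi, if_pos hi]
        exact sum_pOf hG hiI hj.2
      · rw [if_neg hi, if_neg hi]
        exact sum_pOf_upper hG hiI hj.2
    rw [Finset.prod_congr rfl (fun i _ => hprod i)]
    rw [← Finset.prod_filter_mul_prod_filter_not Finset.univ (· ∈ S)]
    have hfil1 : Finset.univ.filter (fun i : Fin n => i ∈ S) = S := by ext i; simp
    have hfil2 : Finset.univ.filter (fun i : Fin n => ¬ i ∈ S) = Finset.univ \ S := by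
      ext i; simp [Finset.mem_sdiff]
    congr 1
    · rw [hfil1]
      exact Finset.prod_congr rfl (fun i hi => if_pos hi)
    · rw [hfil2]
      exact Finset.prod_congr rfl (fun i hi => if_neg (Finset.mem_sdiff.mp hi).2)
  rw [Finset.sum_congr rfl hinner]
  unfold QProph eMinBer
  exact powerset_reindex n (fun a => G a j) (fun a => 1 - G a j)
    (fun c => min ((c:ℝ)) (k:ℝ))


lemma Proph_eq (k n : ℕ) (hk : 1 ≤ k) (hkn : k ≤ n) (hm : 1 ≤ m) (hG : IsTypeDist n m G)
    (r : ℕ → ℝ) (hr : IsValuation m r) :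
    Proph k n m r (pOf G) = ∑ j ∈ Icc 1 m, cOf m r j * QProph k n G j := by
  classical
  unfold Proph
  have h1 : ∀ t ∈ Fintype.piFinset (fun _ : Fin n => Icc 1 m),
      (∏ i : Fin n, pOf G (i.1+1) (t i)) * prophVal n k (fun i => r (t i))
      = ∑ j ∈ Icc 1 m, cOf m r j * ((∏ i : Fin n, pOf G (i.1+1) (t i))
          * min (((Finset.univ.filter (fun i => t i ≤ j)).card : ℝ)) (k:ℝ)) := by
    intro t ht
    have htmem : ∀ i, t i ∈ Icc 1 m := Fintype.mem_piFinset.mp ht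
    rw [prophVal_layer k n hk hkn hm r hr t htmem, Finset.mul_sum]
    apply Finset.sum_congr rfl
    intro j _
    ring
  rw [Finset.sum_congr rfl h1, Finset.sum_comm]
  apply Finset.sum_congr rfl
  intro j hj
  rw [← Finset.mul_sum, sum_piFinset_min k n hG hj]

lemma QProph_nonneg (k n : ℕ) (hG : IsTypeDist n m G) {j : ℕ} (hj : j ∈ Icc 1 m) :
    0 ≤ QProph k n G j := by
  simp only [mem_Icc] at hj
  unfold QProph eMinBer
  apply Finset.sum_nonneg
  intro T hT
  have hTsub := Finset.mem_powerset.mp hT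
  apply mul_nonneg
  apply mul_nonneg
  · exact Finset.prod_nonneg fun a ha => G_nonneg hG (hTsub ha) hj.2
  · refine Finset.prod_nonneg fun a ha => ?_
    have : a ∈ Icc 1 n := (Finset.sdiff_subset) ha
    have := G_le_one hG this hj.2
    linarith
  · positivity

lemma QProph_m (k n : ℕ) (hk : 1 ≤ k) (hkn : k ≤ n) (hG : IsTypeDist n m G) :
    QProph k n G m = (k:ℝ) := by
  classical
  unfold QProph eMinBer
  rw [Finset.sum_eq_single_of_mem (Icc 1 n) (Finset.mem_powerset_self _)]
  · have h1 : ∀ a ∈ Icc 1 n, G a m = 1 := fun a ha => (hG a ha).2.1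
    rw [Finset.prod_congr rfl h1, Finset.prod_const_one, Finset.sdiff_self,
        Finset.prod_empty, Nat.card_Icc]
    simp only [one_mul]
    rw [show n + 1 - 1 = n by omega]
    exact min_eq_right (by exact_mod_cast hkn)
  · intro T hT hTne
    have hTsub := Finset.mem_powerset.mp hT
    have hss : T ⊂ Icc 1 n := Finset.ssubset_iff_subset_ne.mpr ⟨hTsub, hTne⟩
    obtain ⟨a, haI, haT⟩ := Finset.exists_of_ssubset hss
    have : ∏ i ∈ Icc 1 n \ T, (1 - G i m) = 0 := by
      apply Finset.prod_eq_zero (Finset.mem_sdiff.mpr ⟨haI, haT⟩)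
      rw [(hG a haI).2.1]
      ring
    rw [this]
    ring

lemma QExAnte_nonneg (k n : ℕ) (hG : IsTypeDist n m G) {j : ℕ} (hj : j ∈ Icc 1 m) :
    0 ≤ QExAnte k n G j := by
  simp only [mem_Icc] at hj
  apply le_min
  · exact Finset.sum_nonneg fun i hi => G_nonneg hG hi hj.2
  · positivity

lemma QExAnte_m (k n : ℕ) (hk : 1 ≤ k) (hkn : k ≤ n) (hG : IsTypeDist n m G) :
    QExAnte k n G m = (k:ℝ) := by
  unfold QExAnte
  have h1 : ∑ i ∈ Icc 1 n, G i m = (n:ℝ) := by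
    rw [Finset.sum_congr rfl (fun i hi => (hG i hi).2.1), Finset.sum_const, Nat.card_Icc]
    simp
  rw [h1]
  exact min_eq_right (by exact_mod_cast hkn)

end Aux

/-- Reformulating the tight guarantees for OST:
`inf_G sup_{J,ρ} inf_r OST_{J,ρ}(I)/Proph(I) = inf_G sup_{J,ρ} innerLP^{OST(J,ρ)/Proph}(G)`,
and the analogous statement relative to the ex-ante relaxation. -/
theorem stmt4 (k n : ℕ) (hk : 1 ≤ k) (hkn : k < n) :
    (sInf {v : ℝ | ∃ m, 1 ≤ m ∧ ∃ G, IsTypeDist n m G ∧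
        v = sSup {w : ℝ | ∃ J ∈ Finset.Icc 1 m, ∃ ρ ∈ Set.Ioc (0:ℝ) 1,
          w = sInf {u : ℝ | ∃ r : ℕ → ℝ, IsValuation m r ∧
            0 < Proph k n m r (pOf G) ∧
            u = OSTval k n m J ρ r (pOf G) / Proph k n m r (pOf G)}}}
      = sInf {v : ℝ | ∃ m, 1 ≤ m ∧ ∃ G, IsTypeDist n m G ∧
          v = sSup {w : ℝ | ∃ J ∈ Finset.Icc 1 m, ∃ ρ ∈ Set.Ioc (0:ℝ) 1,
            w = innerLP_OST k n m G J ρ (QProph k n G)}}) ∧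
    (sInf {v : ℝ | ∃ m, 1 ≤ m ∧ ∃ G, IsTypeDist n m G ∧
        v = sSup {w : ℝ | ∃ J ∈ Finset.Icc 1 m, ∃ ρ ∈ Set.Ioc (0:ℝ) 1,
          w = sInf {u : ℝ | ∃ r : ℕ → ℝ, IsValuation m r ∧
            0 < ExAnte k n m r (pOf G) ∧
            u = OSTval k n m J ρ r (pOf G) / ExAnte k n m r (pOf G)}}}
      = sInf {v : ℝ | ∃ m, 1 ≤ m ∧ ∃ G, IsTypeDist n m G ∧
          v = sSup {w : ℝ | ∃ J ∈ Finset.Icc 1 m, ∃ ρ ∈ Set.Ioc (0:ℝ) 1,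
            w = innerLP_OST k n m G J ρ (QExAnte k n G)}}) := by
  constructor
  · congr 1
    ext v
    simp only [Set.mem_setOf_eq]
    refine exists_congr fun m => and_congr_right fun hm => exists_congr fun G =>
      and_congr_right fun hG => ?_
    have hw : {w : ℝ | ∃ J ∈ Finset.Icc 1 m, ∃ ρ ∈ Set.Ioc (0:ℝ) 1,
          w = sInf {u : ℝ | ∃ r : ℕ → ℝ, IsValuation m r ∧
            0 < Proph k n m r (pOf G) ∧
            u = OSTval k n m J ρ r (pOf G) / Proph k n m r (pOf G)}}
        = {w : ℝ | ∃ J ∈ Finset.Icc 1 m, ∃ ρ ∈ Set.Ioc (0:ℝ) 1,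
            w = innerLP_OST k n m G J ρ (QProph k n G)} := by
      ext w
      simp only [Set.mem_setOf_eq]
      refine exists_congr fun J => and_congr_right fun hJ => exists_congr fun ρ =>
        and_congr_right fun hρ => ?_
      rw [key_lemma k n hk hkn hm hG hJ hρ (QProph k n G)
        (fun r => Proph k n m r (pOf G))
        (fun j hj => QProph_nonneg k n hG hj)
        (by rw [QProph_m k n hk (le_of_lt hkn) hG]; exact_mod_cast hk)
        (fun r hr => Proph_eq k n hk (le_of_lt hkn) hm hG r hr)]
    rw [hw]
  · congr 1
    ext v
    simp only [Set.mem_setOf_eq]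
    refine exists_congr fun m => and_congr_right fun hm => exists_congr fun G =>
      and_congr_right fun hG => ?_
    have hw : {w : ℝ | ∃ J ∈ Finset.Icc 1 m, ∃ ρ ∈ Set.Ioc (0:ℝ) 1,
          w = sInf {u : ℝ | ∃ r : ℕ → ℝ, IsValuation m r ∧
            0 < ExAnte k n m r (pOf G) ∧
            u = OSTval k n m J ρ r (pOf G) / ExAnte k n m r (pOf G)}}
        = {w : ℝ | ∃ J ∈ Finset.Icc 1 m, ∃ ρ ∈ Set.Ioc (0:ℝ) 1,
            w = innerLP_OST k n m G J ρ (QExAnte k n G)} := by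
      ext w
      simp only [Set.mem_setOf_eq]
      refine exists_congr fun J => and_congr_right fun hJ => exists_congr fun ρ =>
        and_congr_right fun hρ => ?_
      rw [key_lemma k n hk hkn hm hG hJ hρ (QExAnte k n G)
        (fun r => ExAnte k n m r (pOf G))
        (fun j hj => QExAnte_nonneg k n hG hj)
        (by rw [QExAnte_m k n hk (le_of_lt hkn) hG]; exact_mod_cast hk)
        (fun r hr => ExAnte_eq k n hk hkn hm hG r hr)]
    rw [hw]
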